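/- arXiv:1509.08894 — 3 statements merged into one kernel-verified Lean document; each statement's English description precedes it below -/
import Mathlib

section
/- With the notation of the multi-group multi-patch vector-host model, if M_{vh} M_{hv} is irreducible then min_{j=1,…,n} L_j ≤ R_0²(n,m) ≤ max_{j=1,…,n} L_j, where R_0² = ρ(M_{vh} M_{hv}) and L_j = (β_{hv} β_{vh} / (μ_j + γ_j)) ∑_{k=1}^m a_k² p_{jk} N_{v,k} / ((∑_{l=1}^n p_{lk} N_{h,l}) (μ_v + δ_k)). -/
open Filter
open scoped ENNReal NNReal

noncomputable def specRad {ι : Type*} [Fintype ι] [DecidableEq ι] (A : Matrix ι ι ℝ) : ℝ :=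
  sSup ((fun z : ℂ => ‖z‖) '' spectrum ℂ (A.map ((↑) : ℝ → ℂ)))

def MatIrreducible {ι : Type*} [Fintype ι] [DecidableEq ι] (A : Matrix ι ι ℝ) : Prop :=
  ∀ i j : ι, ∃ k : ℕ, 0 < k ∧ 0 < (A ^ k) i j

section General
variable {n : ℕ} [NeZero n]

attribute [local instance] Matrix.linftyOpNormedRing Matrix.linftyOpNormedAlgebra
  Matrix.linftyOpNormedAddCommGroup Matrix.linftyOpNormedSpace

lemma specRad_rowSum_bounds (B : Matrix (Fin n) (Fin n) ℝ) (hB : ∀ i j, 0 ≤ B i j) :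
    (⨅ i, ∑ j, B i j) ≤ specRad B ∧ specRad B ≤ ⨆ i, ∑ j, B i j := by
  haveI : Nonempty (Fin n) := ⟨⟨0, Nat.pos_of_ne_zero (NeZero.ne n)⟩⟩
  haveI : CompleteSpace (Matrix (Fin n) (Fin n) ℂ) := FiniteDimensional.complete ℂ _
  set Bc : Matrix (Fin n) (Fin n) ℂ := B.map ((↑) : ℝ → ℂ) with hBc
  have hrow_le : ∀ (M : Matrix (Fin n) (Fin n) ℂ) (i : Fin n), ∑ j, ‖M i j‖ ≤ ‖M‖ := by
    intro M i
    rw [Matrix.linfty_opNorm_def]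
    have h1 : (∑ j, ‖M i j‖₊) ≤ (Finset.univ.sup fun i => ∑ j, ‖M i j‖₊) :=
      Finset.le_sup (f := fun i => ∑ j, ‖M i j‖₊) (Finset.mem_univ i)
    calc ∑ j, ‖M i j‖ = ((∑ j, ‖M i j‖₊ : ℝ≥0) : ℝ) := by push_cast; rfl
      _ ≤ _ := NNReal.coe_le_coe.mpr h1
  have hnorm_le : ∀ (M : Matrix (Fin n) (Fin n) ℂ) (R : ℝ), 0 ≤ R →
      (∀ i, ∑ j, ‖M i j‖ ≤ R) → ‖M‖ ≤ R := by
    intro M R hR h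
    rw [Matrix.linfty_opNorm_def]
    have : (Finset.univ.sup fun i => ∑ j, ‖M i j‖₊) ≤ R.toNNReal := by
      refine Finset.sup_le fun i _ => ?_
      rw [← NNReal.coe_le_coe, Real.coe_toNNReal _ hR]
      calc ((∑ j, ‖M i j‖₊ : ℝ≥0) : ℝ) = ∑ j, ‖M i j‖ := by push_cast; rfl
        _ ≤ R := h i
    calc ((Finset.univ.sup fun i => ∑ j, ‖M i j‖₊ : ℝ≥0) : ℝ)
        ≤ (R.toNNReal : ℝ) := NNReal.coe_le_coe.mpr this
      _ = R := Real.coe_toNNReal _ hR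
  have hbdd : BddAbove ((fun z : ℂ => ‖z‖) '' spectrum ℂ Bc) := by
    refine ⟨‖Bc‖, ?_⟩
    rintro x ⟨z, hz, rfl⟩
    exact (spectrum.norm_le_norm_of_mem hz)
  constructor
  · set c : ℝ := ⨅ i, ∑ j, B i j with hc
    have hc0 : 0 ≤ c := le_ciInf fun i => Finset.sum_nonneg fun j _ => hB i j
    have hcle : ∀ i, c ≤ ∑ j, B i j := fun i => ciInf_le (Finite.bddBelow_range _) i
    have hpow : ∀ k : ℕ, ∀ i, c ^ k ≤ ∑ j, (B ^ k) i j := by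
      intro k
      induction k with
      | zero => intro i; simp [Matrix.one_apply]
      | succ k ih =>
        intro i
        have hBk : B ^ (k + 1) = B * B ^ k := by rw [pow_succ']
        have h1 : ∑ j, (B * B ^ k) i j = ∑ l, B i l * ∑ j, (B ^ k) l j := by
          simp only [Matrix.mul_apply, Finset.mul_sum]
          rw [Finset.sum_comm]
        have h2 : ∑ l, B i l * c ^ k ≤ ∑ l, B i l * ∑ j, (B ^ k) l j :=
          Finset.sum_le_sum fun l _ => mul_le_mul_of_nonneg_left (ih l) (hB i l)
        have h3 : c * c ^ k ≤ (∑ l, B i l) * c ^ k :=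
          mul_le_mul_of_nonneg_right (hcle i) (pow_nonneg hc0 k)
        rw [hBk, h1]
        calc c ^ (k + 1) = c * c ^ k := by ring
          _ ≤ (∑ l, B i l) * c ^ k := h3
          _ = ∑ l, B i l * c ^ k := by rw [Finset.sum_mul]
          _ ≤ _ := h2
    have hmap : ∀ k : ℕ, (B ^ k).map ((↑) : ℝ → ℂ) = Bc ^ k := by
      intro k
      have := map_pow (Complex.ofRealHom.mapMatrix (m := Fin n)) B k
      exact this
    have hnormpow : ∀ k : ℕ, c ^ k ≤ ‖Bc ^ k‖ := by
      intro k
      obtain ⟨i⟩ := ‹Nonempty (Fin n)›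
      calc c ^ k ≤ ∑ j, (B ^ k) i j := hpow k i
        _ ≤ ∑ j, ‖(Bc ^ k) i j‖ := by
            refine Finset.sum_le_sum fun j _ => ?_
            rw [← hmap k]
            simp only [Matrix.map_apply, Complex.norm_real]
            exact le_abs_self _
        _ ≤ ‖Bc ^ k‖ := hrow_le _ i
    have hten := spectrum.pow_nnnorm_pow_one_div_tendsto_nhds_spectralRadius Bc
    have hbound : ENNReal.ofReal c ≤ spectralRadius ℂ Bc := by
      refine ge_of_tendsto hten ?_
      filter_upwards [Filter.eventually_gt_atTop 0] with k hk
      have hk' : (k : ℝ) ≠ 0 := Nat.cast_ne_zero.mpr hk.ne'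
      have h1 : (ENNReal.ofReal c) ^ k ≤ (‖Bc ^ k‖₊ : ℝ≥0∞) := by
        rw [← ENNReal.ofReal_pow hc0, ← enorm_eq_nnnorm, ← ofReal_norm]
        exact ENNReal.ofReal_le_ofReal (hnormpow k)
      calc ENNReal.ofReal c = ((ENNReal.ofReal c) ^ k) ^ (1 / (k : ℝ)) := by
            rw [← ENNReal.rpow_natCast, ← ENNReal.rpow_mul, mul_one_div, div_self hk',
              ENNReal.rpow_one]
        _ ≤ (‖Bc ^ k‖₊ : ℝ≥0∞) ^ (1 / (k : ℝ)) :=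
            ENNReal.rpow_le_rpow h1 (by positivity)
    obtain ⟨z, hz, hzr⟩ := spectrum.exists_nnnorm_eq_spectralRadius Bc
    have h2 : ENNReal.ofReal c ≤ ENNReal.ofReal ‖z‖ := by
      rw [ofReal_norm, enorm_eq_nnnorm, hzr]; exact hbound
    have hcz : c ≤ ‖z‖ := (ENNReal.ofReal_le_ofReal_iff (norm_nonneg z)).mp h2
    calc c ≤ ‖z‖ := hcz
      _ = ‖z‖ := rfl
      _ ≤ specRad B := le_csSup hbdd ⟨z, hz, rfl⟩
  · set S : ℝ := ⨆ i, ∑ j, B i j with hSdef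
    obtain ⟨i0⟩ := ‹Nonempty (Fin n)›
    have hSle : ∀ i, ∑ j, B i j ≤ S :=
      fun i => le_ciSup (f := fun i => ∑ j, B i j) (Finite.bddAbove_range _) i
    have hS0 : 0 ≤ S := le_trans (Finset.sum_nonneg fun j _ => hB i0 j) (hSle i0)
    refine Real.sSup_le ?_ hS0
    rintro x ⟨z, hz, rfl⟩
    have h1 : ‖z‖ ≤ ‖Bc‖ := spectrum.norm_le_norm_of_mem hz
    refine h1.trans (hnorm_le Bc S hS0 fun i => ?_)
    calc ∑ j, ‖Bc i j‖ = ∑ j, B i j := by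
          refine Finset.sum_congr rfl fun j _ => ?_
          simp only [hBc, Matrix.map_apply, Complex.norm_real]
          exact abs_of_nonneg (hB i j)
      _ ≤ S := hSle i

end General

lemma specRad_conj {n : ℕ} (B : Matrix (Fin n) (Fin n) ℝ) (w : Fin n → ℝ)
    (hw : ∀ i, w i ≠ 0) :
    specRad (Matrix.of fun i j => (w i)⁻¹ * B i j * w j) = specRad B := by
  set C : Matrix (Fin n) (Fin n) ℝ := Matrix.of fun i j => (w i)⁻¹ * B i j * w j with hC
  have hwℂ : ∀ i, (w i : ℂ) ≠ 0 := fun i => by exact_mod_cast hw i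
  set u : (Matrix (Fin n) (Fin n) ℂ)ˣ :=
    { val := Matrix.diagonal fun i => (w i : ℂ)
      inv := Matrix.diagonal fun i => (w i : ℂ)⁻¹
      val_inv := by
        rw [Matrix.diagonal_mul_diagonal]
        convert Matrix.diagonal_one using 2
        exact funext fun i => mul_inv_cancel₀ (hwℂ i)
      inv_val := by
        rw [Matrix.diagonal_mul_diagonal]
        convert Matrix.diagonal_one using 2
        exact funext fun i => inv_mul_cancel₀ (hwℂ i) } with hu
  have key : C.map ((↑) : ℝ → ℂ)
      = (↑u⁻¹ : Matrix (Fin n) (Fin n) ℂ) * (B.map ((↑) : ℝ → ℂ))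
        * (↑u : Matrix (Fin n) (Fin n) ℂ) := by
    have hinv : (↑u⁻¹ : Matrix (Fin n) (Fin n) ℂ) = Matrix.diagonal fun i => (w i : ℂ)⁻¹ := rfl
    have hval : (↑u : Matrix (Fin n) (Fin n) ℂ) = Matrix.diagonal fun i => (w i : ℂ) := rfl
    ext i j
    rw [hinv, hval, Matrix.mul_diagonal, Matrix.diagonal_mul]
    simp only [hC, Matrix.map_apply, Matrix.of_apply]
    push_cast
    ring
  unfold specRad
  rw [key, spectrum.units_conjugate']

theorem stmt6 {n m : ℕ} [NeZero n] (βvh βhv μv : ℝ) (a Nv δ : Fin m → ℝ)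
    (Nh μ γ : Fin n → ℝ) (p : Fin n → Fin m → ℝ)
    (hβvh : 0 < βvh) (hβhv : 0 < βhv) (hμv : 0 < μv)
    (ha : ∀ j, 0 < a j) (hNv : ∀ j, 0 < Nv j) (hδ : ∀ j, 0 < δ j)
    (hNh : ∀ i, 0 < Nh i) (hμ : ∀ i, 0 < μ i) (hγ : ∀ i, 0 < γ i)
    (hp : ∀ i j, 0 ≤ p i j) (hrow : ∀ i, ∑ j, p i j = 1)
    (hS : ∀ j, 0 < ∑ l, p l j * Nh l)
    (Mhv : Matrix (Fin m) (Fin n) ℝ)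
    (Mvh : Matrix (Fin n) (Fin m) ℝ)
    (hMhv : ∀ j i, Mhv j i = a j * βhv * p i j * Nv j / ((μ i + γ i) * ∑ l, p l j * Nh l))
    (hMvh : ∀ i j, Mvh i j = a j * βvh * p i j * Nh i / ((μv + δ j) * ∑ l, p l j * Nh l))
    (hirr : MatIrreducible (Mvh * Mhv)) :
    (⨅ j : Fin n, (βhv * βvh / (μ j + γ j)) *
        ∑ k, a k ^ 2 * p j k * Nv k / ((∑ l, p l k * Nh l) * (μv + δ k)))
      ≤ specRad (Mvh * Mhv) ∧
    specRad (Mvh * Mhv) ≤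
      ⨆ j : Fin n, (βhv * βvh / (μ j + γ j)) *
        ∑ k, a k ^ 2 * p j k * Nv k / ((∑ l, p l k * Nh l) * (μv + δ k)) := by
  classical
  have hμγ : ∀ i, (0:ℝ) < μ i + γ i := fun i => by have := hμ i; have := hγ i; linarith
  have hμδ : ∀ k, (0:ℝ) < μv + δ k := fun k => by have := hδ k; linarith
  set w : Fin n → ℝ := fun i => (μ i + γ i) * Nh i with hwdef
  have hwpos : ∀ i, 0 < w i := fun i => mul_pos (hμγ i) (hNh i)
  set B : Matrix (Fin n) (Fin n) ℝ := Mvh * Mhv with hBdef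
  have hMvh_nn : ∀ i k, 0 ≤ Mvh i k := by
    intro i k
    rw [hMvh i k]
    exact div_nonneg
      (mul_nonneg (mul_nonneg (mul_nonneg (ha k).le hβvh.le) (hp i k)) (hNh i).le)
      (mul_pos (hμδ k) (hS k)).le
  have hMhv_nn : ∀ k j, 0 ≤ Mhv k j := by
    intro k j
    rw [hMhv k j]
    exact div_nonneg
      (mul_nonneg (mul_nonneg (mul_nonneg (ha k).le hβhv.le) (hp j k)) (hNv k).le)
      (mul_pos (hμγ j) (hS k)).le
  have hBnn : ∀ i j, 0 ≤ B i j := by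
    intro i j
    rw [hBdef, Matrix.mul_apply]
    exact Finset.sum_nonneg fun k _ => mul_nonneg (hMvh_nn i k) (hMhv_nn k j)
  set C : Matrix (Fin n) (Fin n) ℝ := Matrix.of fun i j => (w i)⁻¹ * B i j * w j with hCdef
  have hCnn : ∀ i j, 0 ≤ C i j := fun i j =>
    mul_nonneg (mul_nonneg (inv_nonneg.mpr (hwpos i).le) (hBnn i j)) (hwpos j).le
  -- inner sum computation
  have hinner : ∀ k, ∑ j, Mhv k j * w j = a k * βhv * Nv k := by
    intro k
    have hterm : ∀ j, Mhv k j * w j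
        = (a k * βhv * Nv k / (∑ l, p l k * Nh l)) * (p j k * Nh j) := by
      intro j
      rw [hMhv k j, hwdef]
      have h1 : (μ j + γ j) ≠ 0 := (hμγ j).ne'
      have h2 : (∑ l, p l k * Nh l) ≠ 0 := (hS k).ne'
      field_simp
    rw [Finset.sum_congr rfl fun j _ => hterm j, ← Finset.mul_sum]
    rw [div_mul_cancel₀ _ (hS k).ne']
  -- row sums of C are the L values
  have hkey : ∀ i, ∑ j, C i j = (βhv * βvh / (μ i + γ i)) *
      ∑ k, a k ^ 2 * p i k * Nv k / ((∑ l, p l k * Nh l) * (μv + δ k)) := by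
    intro i
    have h1 : ∑ j, B i j * w j = ∑ k, Mvh i k * ∑ j, Mhv k j * w j := by
      simp only [hBdef, Matrix.mul_apply, Finset.sum_mul]
      rw [Finset.sum_comm]
      simp only [Finset.mul_sum, mul_assoc]
    have h2 : ∑ k, Mvh i k * (a k * βhv * Nv k)
        = w i * ((βhv * βvh / (μ i + γ i)) *
            ∑ k, a k ^ 2 * p i k * Nv k / ((∑ l, p l k * Nh l) * (μv + δ k))) := by
      have hterm : ∀ k, Mvh i k * (a k * βhv * Nv k)
          = w i * ((βhv * βvh / (μ i + γ i)) *
              (a k ^ 2 * p i k * Nv k / ((∑ l, p l k * Nh l) * (μv + δ k)))) := by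
        intro k
        rw [hMvh i k, hwdef]
        have h1 : (μ i + γ i) ≠ 0 := (hμγ i).ne'
        have h2 : (∑ l, p l k * Nh l) ≠ 0 := (hS k).ne'
        have h3 : (μv + δ k) ≠ 0 := (hμδ k).ne'
        field_simp
      rw [Finset.sum_congr rfl fun k _ => hterm k, ← Finset.mul_sum, ← Finset.mul_sum]
    have h3 : ∑ j, C i j = (w i)⁻¹ * ∑ j, B i j * w j := by
      rw [Finset.mul_sum]
      exact Finset.sum_congr rfl fun j _ => by rw [hCdef]; simp [Matrix.of_apply]; ring
    rw [h3, h1, Finset.sum_congr rfl fun k _ => by rw [hinner k], h2,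
      inv_mul_cancel_left₀ (hwpos i).ne']
  obtain ⟨hlo, hhi⟩ := specRad_rowSum_bounds C hCnn
  have hspec : specRad C = specRad B := specRad_conj B w fun i => (hwpos i).ne'
  constructor
  · calc (⨅ j : Fin n, (βhv * βvh / (μ j + γ j)) *
        ∑ k, a k ^ 2 * p j k * Nv k / ((∑ l, p l k * Nh l) * (μv + δ k)))
        = ⨅ i, ∑ j, C i j := iInf_congr fun i => (hkey i).symm
      _ ≤ specRad C := hlo
      _ = specRad (Mvh * Mhv) := hspec
  · calc specRad (Mvh * Mhv) = specRad C := hspec.symm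
      _ ≤ ⨆ i, ∑ j, C i j := hhi
      _ = _ := iSup_congr fun i => hkey i
end

section
/- If the 2×2 residence-time matrix is P = [[0,1],[1,0]] (group 1 spends all time in patch 2 and group 2 all time in patch 1), then the 2×2 matrix M_{vh} M_{hv} is diagonal (its off-diagonal entries vanish), hence M_{vh} M_{hv} is not irreducible even though P is irreducible. -/
lemma diag_pow_offdiag (A : Matrix (Fin 2) (Fin 2) ℝ)
    (h01 : A 0 1 = 0) (h10 : A 1 0 = 0) :
    ∀ k : ℕ, 0 < k → (A ^ k) 0 1 = 0 := by
  intro k hk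
  induction k with
  | zero => exact absurd hk (lt_irrefl 0)
  | succ n ih =>
    rcases Nat.eq_zero_or_pos n with hn | hn
    · subst hn; simpa using h01
    · have := ih hn
      rw [pow_succ, Matrix.mul_apply, Fin.sum_univ_two, this, h01]
      ring

theorem stmt9 {a : Fin 2 → ℝ} {βvh βhv μv : ℝ} {Nv δ : Fin 2 → ℝ}
    {Nh μ γ : Fin 2 → ℝ}
    (hβvh : 0 < βvh) (hβhv : 0 < βhv) (hμv : 0 < μv)
    (ha : ∀ j, 0 < a j) (hNv : ∀ j, 0 < Nv j) (hδ : ∀ j, 0 < δ j)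
    (hNh : ∀ i, 0 < Nh i) (hμ : ∀ i, 0 < μ i) (hγ : ∀ i, 0 < γ i)
    (p : Fin 2 → Fin 2 → ℝ)
    (Mhv Mvh : Matrix (Fin 2) (Fin 2) ℝ)
    (hMhv : ∀ j i, Mhv j i = a j * βhv * p i j * Nv j /
        ((μ i + γ i) * (p 0 j * Nh 0 + p 1 j * Nh 1)))
    (hMvh : ∀ i j, Mvh i j = a j * βvh * p i j * Nh i /
        ((μv + δ j) * (p 0 j * Nh 0 + p 1 j * Nh 1)))
    (hP : p = ![![0, 1], ![1, 0]]) :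
    (Mvh * Mhv) 0 1 = 0 ∧ (Mvh * Mhv) 1 0 = 0 ∧
      ¬ MatIrreducible (Mvh * Mhv) := by
  have hMvh00 : Mvh 0 0 = 0 := by
    rw [hMvh]; simp [hP]
  have hMvh11 : Mvh 1 1 = 0 := by
    rw [hMvh]; simp [hP]
  have hMhv00 : Mhv 0 0 = 0 := by
    rw [hMhv]; simp [hP]
  have hMhv11 : Mhv 1 1 = 0 := by
    rw [hMhv]; simp [hP]
  have h01 : (Mvh * Mhv) 0 1 = 0 := by
    rw [Matrix.mul_apply, Fin.sum_univ_two, hMvh00, hMhv11]; ring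
  have h10 : (Mvh * Mhv) 1 0 = 0 := by
    rw [Matrix.mul_apply, Fin.sum_univ_two, hMvh11, hMhv00]; ring
  refine ⟨h01, h10, fun hirr => ?_⟩
  obtain ⟨k, hk, hpos⟩ := hirr 0 1
  rw [diag_pow_offdiag _ h01 h10 k hk] at hpos
  exact lt_irrefl 0 hpos
end

section
/- With the notation of the multi-group multi-patch model and assuming M_{hv} M_{vh} is irreducible, the basic reproduction number satisfies min_{j=1,…,m} L_j^⋄ ≤ R_0²(n,m) ≤ max_{j=1,…,m} L_j^⋄, where L_j^⋄ = (a_j β_{hv} β_{vh} /((μ_v+δ_j) ∑_{l=1}^n p_{lj} N_{h,l})) ∑_{k=1}^n (p_{kj} N_{h,k}/(μ_k+γ_k)) (∑_{i=1}^m a_i p_{ki} N_{v,i} / ∑_{l=1}^n p_{li} N_{h,l}), obtained by bounding ρ(M_{hv} M_{vh}) by its column sums. -/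
section PF
open Matrix Filter
open scoped NNReal ENNReal

attribute [local instance] Matrix.linftyOpNormedRing Matrix.linftyOpNormedAlgebra
  Matrix.linftyOpNormedSpace

variable {m : ℕ} [NeZero m]

lemma spectrum_transpose (B : Matrix (Fin m) (Fin m) ℂ) :
    spectrum ℂ Bᵀ = spectrum ℂ B := by
  ext z
  simp only [spectrum.mem_iff, Matrix.isUnit_iff_isUnit_det]
  have : (algebraMap ℂ (Matrix (Fin m) (Fin m) ℂ) z - B)ᵀ
      = algebraMap ℂ (Matrix (Fin m) (Fin m) ℂ) z - Bᵀ := by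
    rw [Matrix.transpose_sub, Matrix.algebraMap_eq_diagonal, Matrix.diagonal_transpose]
  rw [← this, Matrix.det_transpose]

lemma nnnorm_map_sum (C : Matrix (Fin m) (Fin m) ℝ) (hC : ∀ i j, 0 ≤ C i j) (i : Fin m) :
    ((∑ j, ‖(C.map ((↑) : ℝ → ℂ)) i j‖₊ : ℝ≥0) : ℝ) = ∑ j, C i j := by
  push_cast
  refine Finset.sum_congr rfl fun j _ => ?_
  simp [Matrix.map_apply, abs_of_nonneg (hC i j)]

lemma specRad_colsum_bounds (A : Matrix (Fin m) (Fin m) ℝ) (hA : ∀ i j, 0 ≤ A i j) :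
    (⨅ j, ∑ i, A i j) ≤ specRad A ∧ specRad A ≤ ⨆ j, ∑ i, A i j := by
  have hm : Nonempty (Fin m) := Fin.pos_iff_nonempty.mp (Nat.pos_of_ne_zero (NeZero.ne m))
  set B : Matrix (Fin m) (Fin m) ℂ := A.map ((↑) : ℝ → ℂ) with hB
  set S : ℝ := ⨆ j, ∑ i, A i j with hSdef
  set c : ℝ := ⨅ j, ∑ i, A i j with hcdef
  have hcol_nonneg : ∀ j, (0:ℝ) ≤ ∑ i, A i j := fun j =>
    Finset.sum_nonneg fun i _ => hA i j
  have hc0 : 0 ≤ c := by rw [hcdef]; exact le_ciInf hcol_nonneg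
  have hcle : ∀ j, c ≤ ∑ i, A i j := fun j => by
    rw [hcdef]; exact ciInf_le (Finite.bddBelow_range (fun j : Fin m => ∑ i, A i j)) j
  have hSle : ∀ j, (∑ i, A i j) ≤ S := fun j => by
    rw [hSdef]; exact le_ciSup (Finite.bddAbove_range (fun j : Fin m => ∑ i, A i j)) j
  -- the transpose has norm equal to some column sum
  have hBT_bound : ∀ z ∈ spectrum ℂ B, ‖z‖ ≤ S := by
    intro z hz
    rw [← spectrum_transpose] at hz
    have h1 : ‖z‖ ≤ ‖Bᵀ‖ := spectrum.norm_le_norm_of_mem hz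
    have h2 : ‖Bᵀ‖ ≤ S := by
      rw [Matrix.linfty_opNorm_def]
      obtain ⟨j, _, hj⟩ := Finset.exists_mem_eq_sup Finset.univ Finset.univ_nonempty
        (fun i : Fin m => ∑ j, ‖Bᵀ i j‖₊)
      rw [hj]
      have : ((∑ i, ‖Bᵀ j i‖₊ : ℝ≥0) : ℝ) = ∑ i, A i j := by
        have := nnnorm_map_sum Aᵀ (fun i j => hA j i) j
        simpa [Matrix.transpose_apply, Matrix.map_apply, hB] using this
      rw [this]
      exact hSle j
    calc ‖z‖ = ‖z‖ := rfl
      _ ≤ ‖Bᵀ‖ := h1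
      _ ≤ S := h2
  have hbdd : BddAbove ((fun z : ℂ => ‖z‖) '' spectrum ℂ B) := by
    exact ⟨S, fun x ⟨z, hz, hxz⟩ => hxz ▸ hBT_bound z hz⟩
  have hne : (spectrum ℂ B).Nonempty := spectrum.nonempty B
  constructor
  · -- lower bound via Gelfand
    have hpow_nonneg : ∀ k : ℕ, ∀ i j, 0 ≤ (A ^ k) i j := by
      intro k
      induction k with
      | zero => intro i j; by_cases h : i = j <;> simp [pow_zero, Matrix.one_apply, h]
      | succ k ih =>
        intro i j
        rw [pow_succ, Matrix.mul_apply]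
        exact Finset.sum_nonneg fun l _ => mul_nonneg (ih i l) (hA l j)
    have hpow_col : ∀ k : ℕ, 1 ≤ k → ∀ j, c ^ k ≤ ∑ i, (A ^ k) i j := by
      intro k hk
      induction k with
      | zero => omega
      | succ k ih =>
        intro j
        rcases Nat.eq_zero_or_pos k with h1 | h1
        · subst h1
          simpa using hcle j
        · rw [pow_succ, pow_succ]
          calc c ^ k * c ≤ c ^ k * ∑ l, A l j :=
                mul_le_mul_of_nonneg_left (hcle j) (pow_nonneg hc0 k)
            _ = ∑ l, c ^ k * A l j := Finset.mul_sum _ _ _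
            _ ≤ ∑ l, (∑ i, (A ^ k) i l) * A l j := by
                refine Finset.sum_le_sum fun l _ => ?_
                exact mul_le_mul_of_nonneg_right (ih h1 l) (hA l j)
            _ = ∑ i, (A ^ k * A) i j := by
                simp only [Matrix.mul_apply, Finset.sum_mul]
                rw [Finset.sum_comm]
    have hBk : ∀ k : ℕ, B ^ k = (A ^ k).map ((↑) : ℝ → ℂ) := by
      intro k
      have h := map_pow (Complex.ofRealHom.mapMatrix) A k
      simp only [RingHom.mapMatrix_apply] at h
      rw [hB]
      convert h.symm using 2 <;> rfl
    have hnorm : ∀ k, 1 ≤ k → c ^ k ≤ ‖B ^ k‖ := by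
      intro k hk
      have hrow : ∀ i, ∑ j, (A ^ k) i j ≤ ‖B ^ k‖ := by
        intro i
        have h1 : ((∑ j, ‖(B ^ k) i j‖₊ : ℝ≥0) : ℝ) = ∑ j, (A ^ k) i j := by
          rw [hBk]; exact nnnorm_map_sum _ (hpow_nonneg k) i
        rw [← h1, Matrix.linfty_opNorm_def]
        exact_mod_cast Finset.le_sup (f := fun i => ∑ j, ‖(B ^ k) i j‖₊)
          (Finset.mem_univ i)
      have hmpos : (0:ℝ) < m := by
        exact_mod_cast Nat.pos_of_ne_zero (NeZero.ne m)
      have htot : (m : ℝ) * c ^ k ≤ (m : ℝ) * ‖B ^ k‖ := by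
        calc (m:ℝ) * c ^ k = ∑ _j : Fin m, c ^ k := by
              simp [Finset.sum_const, mul_comm]
          _ ≤ ∑ j, ∑ i, (A ^ k) i j := Finset.sum_le_sum fun j _ => hpow_col k hk j
          _ = ∑ i, ∑ j, (A ^ k) i j := Finset.sum_comm
          _ ≤ ∑ _i : Fin m, ‖B ^ k‖ := Finset.sum_le_sum fun i _ => hrow i
          _ = m * ‖B ^ k‖ := by simp [Finset.sum_const, mul_comm]
      exact le_of_mul_le_mul_left htot hmpos
    have hT := spectrum.pow_nnnorm_pow_one_div_tendsto_nhds_spectralRadius B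
    have hge : ENNReal.ofReal c ≤ spectralRadius ℂ B := by
      refine ge_of_tendsto hT ?_
      filter_upwards [Filter.eventually_ge_atTop 1] with k hk
      have h1 : ENNReal.ofReal (c ^ k) ≤ (‖B ^ k‖₊ : ℝ≥0∞) := by
        rw [← enorm_eq_nnnorm, ← ofReal_norm]
        exact ENNReal.ofReal_le_ofReal (hnorm k hk)
      have hk0 : (k : ℝ) ≠ 0 := by positivity
      calc ENNReal.ofReal c = (ENNReal.ofReal (c ^ k)) ^ (1 / k : ℝ) := by
            rw [ENNReal.ofReal_pow hc0, ← ENNReal.rpow_natCast, ← ENNReal.rpow_mul,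
              mul_one_div, div_self hk0, ENNReal.rpow_one]
        _ ≤ (‖B ^ k‖₊ : ℝ≥0∞) ^ (1 / k : ℝ) :=
            ENNReal.rpow_le_rpow h1 (by positivity)
    obtain ⟨z₀, hz₀, hz₀r⟩ := spectrum.exists_nnnorm_eq_spectralRadius_of_nonempty hne
    rw [← hz₀r] at hge
    have h2 : c ≤ ‖z₀‖ := by
      rw [← enorm_eq_nnnorm, ← ofReal_norm] at hge
      exact (ENNReal.ofReal_le_ofReal_iff (norm_nonneg _)).mp hge
    exact le_trans h2 (le_csSup hbdd ⟨z₀, hz₀, rfl⟩)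
  · -- upper bound
    refine Real.sSup_le ?_ ?_
    · rintro x ⟨z, hz, rfl⟩
      exact hBT_bound z hz
    · exact le_trans (hcol_nonneg (Classical.arbitrary _)) (hSle _)

end PF

theorem stmt16 {n m : ℕ} [NeZero m] (βvh βhv μv : ℝ) (a Nv δ : Fin m → ℝ)
    (Nh μ γ : Fin n → ℝ) (p : Fin n → Fin m → ℝ)
    (hβvh : 0 < βvh) (hβhv : 0 < βhv) (hμv : 0 < μv)
    (ha : ∀ j, 0 < a j) (hNv : ∀ j, 0 < Nv j) (hδ : ∀ j, 0 < δ j)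
    (hNh : ∀ i, 0 < Nh i) (hμ : ∀ i, 0 < μ i) (hγ : ∀ i, 0 < γ i)
    (hp : ∀ i j, 0 ≤ p i j) (hrow : ∀ i, ∑ j, p i j = 1)
    (hS : ∀ j, 0 < ∑ l, p l j * Nh l)
    (Mhv : Matrix (Fin m) (Fin n) ℝ)
    (Mvh : Matrix (Fin n) (Fin m) ℝ)
    (hMhv : ∀ j i, Mhv j i = a j * βhv * p i j * Nv j / ((μ i + γ i) * ∑ l, p l j * Nh l))
    (hMvh : ∀ i j, Mvh i j = a j * βvh * p i j * Nh i / ((μv + δ j) * ∑ l, p l j * Nh l))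
    (hirr : MatIrreducible (Mhv * Mvh)) :
    (⨅ j : Fin m, (a j * βhv * βvh / ((μv + δ j) * ∑ l, p l j * Nh l)) *
        ∑ k, (p k j * Nh k / (μ k + γ k)) *
          (∑ i, a i * p k i * Nv i / ∑ l, p l i * Nh l))
      ≤ specRad (Mhv * Mvh) ∧
    specRad (Mhv * Mvh) ≤
      ⨆ j : Fin m, (a j * βhv * βvh / ((μv + δ j) * ∑ l, p l j * Nh l)) *
        ∑ k, (p k j * Nh k / (μ k + γ k)) *
          (∑ i, a i * p k i * Nv i / ∑ l, p l i * Nh l) := by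
  have hAnn : ∀ i j, 0 ≤ (Mhv * Mvh) i j := by
    intro i j
    rw [Matrix.mul_apply]
    refine Finset.sum_nonneg fun k _ => mul_nonneg ?_ ?_
    · rw [hMhv]
      exact div_nonneg
        (mul_nonneg (mul_nonneg (mul_nonneg (ha i).le hβhv.le) (hp k i)) (hNv i).le)
        (mul_nonneg (add_pos (hμ k) (hγ k)).le (hS i).le)
    · rw [hMvh]
      exact div_nonneg
        (mul_nonneg (mul_nonneg (mul_nonneg (ha j).le hβvh.le) (hp k j)) (hNh k).le)
        (mul_nonneg (add_pos hμv (hδ j)).le (hS j).le)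
  have hcol : ∀ j, ∑ i, (Mhv * Mvh) i j
      = (a j * βhv * βvh / ((μv + δ j) * ∑ l, p l j * Nh l)) *
          ∑ k, (p k j * Nh k / (μ k + γ k)) *
            (∑ i, a i * p k i * Nv i / ∑ l, p l i * Nh l) := by
    intro j
    calc ∑ i, (Mhv * Mvh) i j
        = ∑ k, ∑ i, Mhv i k * Mvh k j := by
          simp only [Matrix.mul_apply]; exact Finset.sum_comm
      _ = ∑ k, (((a j * βhv * βvh / ((μv + δ j) * ∑ l, p l j * Nh l)) *
            (p k j * Nh k / (μ k + γ k))) *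
            ∑ i, a i * p k i * Nv i / ∑ l, p l i * Nh l) := by
          refine Finset.sum_congr rfl fun k _ => ?_
          calc ∑ i, Mhv i k * Mvh k j
              = ∑ i, ((a j * βhv * βvh / ((μv + δ j) * ∑ l, p l j * Nh l)) *
                  (p k j * Nh k / (μ k + γ k))) *
                  (a i * p k i * Nv i / ∑ l, p l i * Nh l) := by
                refine Finset.sum_congr rfl fun i _ => ?_
                rw [hMhv, hMvh]
                have h1 : (μ k + γ k) ≠ 0 := (add_pos (hμ k) (hγ k)).ne'
                have h2 : (μv + δ j) ≠ 0 := (add_pos hμv (hδ j)).ne'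
                have h3 : (∑ l, p l j * Nh l) ≠ 0 := (hS j).ne'
                have h4 : (∑ l, p l i * Nh l) ≠ 0 := (hS i).ne'
                generalize hg : μ k + γ k = g at h1 ⊢
                generalize hd : μv + δ j = d at h2 ⊢
                generalize hs1 : (∑ l, p l j * Nh l) = s1 at h3 ⊢
                generalize hs2 : (∑ l, p l i * Nh l) = s2 at h4 ⊢
                field_simp
            _ = _ := (Finset.mul_sum _ _ _).symm
      _ = ∑ k, ((a j * βhv * βvh / ((μv + δ j) * ∑ l, p l j * Nh l)) *
            ((p k j * Nh k / (μ k + γ k)) *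
            ∑ i, a i * p k i * Nv i / ∑ l, p l i * Nh l)) := by
          simp only [mul_assoc]
      _ = _ := (Finset.mul_sum _ _ _).symm
  obtain ⟨h1, h2⟩ := specRad_colsum_bounds (Mhv * Mvh) hAnn
  constructor
  · refine le_trans (le_of_eq ?_) h1
    exact iInf_congr fun j => (hcol j).symm
  · refine le_trans h2 (le_of_eq ?_)
    exact iSup_congr hcol
end
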